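/- Let a, b, t_1, t_2, … be commuting formal variables. Then in the ring of formal power series over ℤ one has the identity Σ_{p ≥ 0} Σ_{λ ⊢ 2p} #syd_CI(λ;p,p) · a^p b^p t_λ = ∏_{k=1}^∞ (1 − a^k b^k t_{2k})^{−2} · (1 − a^{2k−1} b^{2k−1} t_{2k−1}^2)^{−1}, where t_λ = t_1^{m_1} t_2^{m_2} ⋯ for λ = [1^{m_1} · 2^{m_2} ⋯] (m_i the multiplicity of i in λ), and #syd_CI(λ;p,p) = 0 unless every odd part of λ has even multiplicity. Equivalently: for all p ≥ 0 and every partition λ of 2p, #syd_CI(λ;p,p) equals the coefficient of a^p b^p t_λ in the infinite product. -/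

import Mathlib

open Finset

/-- A signed Young diagram of shape `lam` and signature `(p, q)`, encoded by the
function `f` sending each part length `i` to the number of rows of length `i`
whose leading sign is `+`. -/
structure SYD {n : ℕ} (lam : Nat.Partition n) (p q : ℕ) : Type where
  f : ℕ → ℕ
  le_mult : ∀ i, f i ≤ Multiset.count i lam.parts
  plus_eq : ∑ i ∈ lam.parts.toFinset,
      (f i * ((i + 1) / 2) + (Multiset.count i lam.parts - f i) * (i / 2)) = p
  minus_eq : ∑ i ∈ lam.parts.toFinset,
      (f i * (i / 2) + (Multiset.count i lam.parts - f i) * ((i + 1) / 2)) = q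

abbrev Var : Type := ℕ ⊕ Bool

noncomputable def va : MvPowerSeries Var ℤ := MvPowerSeries.X (Sum.inr true)
noncomputable def vb : MvPowerSeries Var ℤ := MvPowerSeries.X (Sum.inr false)
noncomputable def vt (i : ℕ) : MvPowerSeries Var ℤ := MvPowerSeries.X (Sum.inl i)

noncomputable def geomInv (φ : MvPowerSeries Var ℤ) : MvPowerSeries Var ℤ :=
  MvPowerSeries.invOfUnit (1 - φ) 1

noncomputable def degOf {n : ℕ} (lam : Nat.Partition n) (p q : ℕ) : Var →₀ ℕ :=
  Finsupp.single (Sum.inr true) p + Finsupp.single (Sum.inr false) q +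
    ∑ i ∈ lam.parts.toFinset, Finsupp.single (Sum.inl i) (Multiset.count i lam.parts)


section Aux
open MvPowerSeries
open scoped Classical

theorem key_rec (e : Var →₀ ℕ) (he : e ≠ 0) (d : Var →₀ ℕ) :
    coeff (R := ℤ) d (geomInv (monomial e 1)) =
      (if d = 0 then 1 else 0) +
        (if e ≤ d then coeff (R := ℤ) (d - e) (geomInv (monomial e 1)) else 0) := by
  have hc : constantCoeff (σ := Var) (R := ℤ) (1 - monomial e (1:ℤ)) = (1 : ℤˣ) := by
    rw [map_sub, map_one]
    have : constantCoeff (monomial e (1:ℤ)) = 0 := by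
      rw [← coeff_zero_eq_constantCoeff_apply, coeff_monomial, if_neg (by simpa using he.symm)]
    simp [this]
  have h := MvPowerSeries.mul_invOfUnit (1 - monomial e 1) 1 hc
  have h2 := congrArg (coeff (R := ℤ) d) h
  rw [sub_mul, one_mul, map_sub, coeff_monomial_mul] at h2
  rw [coeff_one] at h2
  unfold geomInv
  split_ifs at h2 ⊢ with h3 h4 h4 <;> simp_all <;> linarith

theorem coeff_geomInv (e : Var →₀ ℕ) (v0 : Var) (h0 : e v0 ≠ 0) (d : Var →₀ ℕ) :
    coeff (R := ℤ) d (geomInv (monomial e 1)) =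
      if ∃ n : ℕ, d = n • e then 1 else 0 := by
  have he : e ≠ 0 := fun h => h0 (by simp [h])
  have main : ∀ M (d : Var →₀ ℕ), d v0 < M →
      coeff (R := ℤ) d (geomInv (monomial e 1)) = if ∃ n : ℕ, d = n • e then 1 else 0 := by
    intro M
    induction M with
    | zero => intro d hd; omega
    | succ M ih =>
      intro d hd
      rw [key_rec e he d]
      by_cases hle : e ≤ d
      · have hdv : e v0 ≤ d v0 := Finsupp.le_def.mp hle v0
        have hne : d ≠ 0 := by
          intro h; rw [h] at hdv; simp at hdv; exact h0 hdv
        have hsub : (d - e) v0 < M := by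
          have : (d - e) v0 = d v0 - e v0 := by simp
          omega
        have hiff : (∃ n : ℕ, d - e = n • e) ↔ (∃ n : ℕ, d = n • e) := by
          constructor
          · rintro ⟨n, hn⟩
            refine ⟨n + 1, ?_⟩
            rw [← tsub_add_cancel_of_le hle, hn, succ_nsmul]
          · rintro ⟨n, hn⟩
            rcases n with _ | n
            · exact absurd (by simpa using hn) hne
            · refine ⟨n, ?_⟩
              rw [hn, succ_nsmul, add_tsub_cancel_right]
        rw [if_pos hle, ih _ hsub, if_neg hne, zero_add, hiff]
      · by_cases hz : d = 0
        · have hex : ∃ n : ℕ, d = n • e := ⟨0, by simp [hz]⟩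
          rw [if_pos hz, if_neg hle, if_pos hex]; norm_num
        · rw [if_neg hz, if_neg hle, if_neg, add_zero]
          rintro ⟨n, hn⟩
          rcases n with _ | n
          · exact hz (by simpa using hn)
          · apply hle
            rw [hn]
            apply Finsupp.le_def.mpr
            intro v
            have h1 : ((n+1) • e) v = (n+1) * e v := by simp
            rw [h1]
            exact Nat.le_mul_of_pos_left (e v) (Nat.succ_pos n)
  exact main (d v0 + 1) d (Nat.lt_succ_self _)

theorem coeff_geomInv_sq (e : Var →₀ ℕ) (v0 : Var) (h1 : e v0 = 1) (d : Var →₀ ℕ) :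
    coeff (R := ℤ) d ((geomInv (monomial e 1)) ^ 2) =
      if ∃ n : ℕ, d = n • e then ((d v0 : ℤ) + 1) else 0 := by
  have h0 : e v0 ≠ 0 := by omega
  rw [pow_two, coeff_mul]
  simp only [coeff_geomInv e v0 h0, ite_zero_mul_ite_zero, mul_one]
  rw [Finset.sum_boole]
  by_cases hd : ∃ n : ℕ, d = n • e
  · obtain ⟨n, rfl⟩ := hd
    rw [if_pos ⟨n, rfl⟩]
    have hv : ((n • e : Var →₀ ℕ) v0 : ℤ) + 1 = (n : ℤ) + 1 := by simp [h1]
    rw [hv]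
    have hcard : ((antidiagonal (n • e)).filter
        (fun x : (Var →₀ ℕ) × (Var →₀ ℕ) => (∃ a : ℕ, x.1 = a • e) ∧ (∃ b : ℕ, x.2 = b • e))).card
        = n + 1 := by
      rw [← Finset.card_range (n+1)]
      apply Finset.card_nbij' (fun x : (Var →₀ ℕ) × (Var →₀ ℕ) => x.1 v0) (fun b : ℕ => (b • e, (n - b) • e))
      · intro x hx
        simp only [Finset.mem_coe, Finset.mem_filter, HasAntidiagonal.mem_antidiagonal] at hx
        obtain ⟨hsum, ⟨a, ha⟩, ⟨b, hb⟩⟩ := hx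
        have := congrArg (fun f : Var →₀ ℕ => f v0) hsum
        simp only [Finsupp.add_apply, Finsupp.smul_apply, ha, hb, smul_eq_mul, h1] at this
        simp only [Finset.mem_coe, Finset.mem_range, ha, Finsupp.smul_apply, smul_eq_mul, h1]
        omega
      · intro b hb
        simp only [Finset.mem_coe, Finset.mem_range] at hb
        simp only [Finset.mem_coe, Finset.mem_filter, HasAntidiagonal.mem_antidiagonal]
        refine ⟨?_, ⟨b, rfl⟩, ⟨n - b, rfl⟩⟩
        rw [← add_nsmul]
        congr 1
        omega
      · intro x hx
        simp only [Finset.mem_coe, Finset.mem_filter, HasAntidiagonal.mem_antidiagonal] at hx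
        obtain ⟨hsum, ⟨a, ha⟩, ⟨b, hb⟩⟩ := hx
        have h2 := congrArg (fun f : Var →₀ ℕ => f v0) hsum
        simp only [Finsupp.add_apply, Finsupp.smul_apply, ha, hb, smul_eq_mul, h1,
          mul_one] at h2
        have hx1 : x.1 v0 = a := by simp [ha, h1]
        beta_reduce
        rw [hx1]
        have : n - a = b := by omega
        rw [this, ← ha, ← hb]
      · intro b hb
        simp [h1]
    rw [hcard]
    push_cast
    ring
  · rw [if_neg hd]
    have : ((antidiagonal d).filter
        (fun x : (Var →₀ ℕ) × (Var →₀ ℕ) => (∃ a : ℕ, x.1 = a • e) ∧ (∃ b : ℕ, x.2 = b • e))) = ∅ := by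
      apply Finset.eq_empty_of_forall_notMem
      intro x hx
      simp only [Finset.mem_filter, HasAntidiagonal.mem_antidiagonal] at hx
      obtain ⟨hsum, ⟨a, ha⟩, ⟨b, hb⟩⟩ := hx
      exact hd ⟨a + b, by rw [← hsum, ha, hb, add_nsmul]⟩
    rw [this]
    simp

noncomputable def e1 (k : ℕ) : Var →₀ ℕ :=
  Finsupp.single (Sum.inr true) k + Finsupp.single (Sum.inr false) k +
    Finsupp.single (Sum.inl (2*k)) 1

noncomputable def e2 (k : ℕ) : Var →₀ ℕ :=
  Finsupp.single (Sum.inr true) (2*k-1) + Finsupp.single (Sum.inr false) (2*k-1) +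
    Finsupp.single (Sum.inl (2*k-1)) 2

lemma e1_apply_inl (k i : ℕ) : e1 k (Sum.inl i) = if 2*k = i then 1 else 0 := by
  simp [e1, Finsupp.single_apply]

lemma e2_apply_inl (k i : ℕ) : e2 k (Sum.inl i) = if 2*k-1 = i then 2 else 0 := by
  simp [e2, Finsupp.single_apply]

lemma e1_apply_inr (k : ℕ) (b : Bool) : e1 k (Sum.inr b) = k := by
  cases b <;> simp [e1, Finsupp.single_apply]

lemma e2_apply_inr (k : ℕ) (b : Bool) : e2 k (Sum.inr b) = 2*k-1 := by
  cases b <;> simp [e2, Finsupp.single_apply]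

theorem coeff_factor (k : ℕ) (hk : 1 ≤ k) (d : Var →₀ ℕ) :
    coeff (R := ℤ) d ((geomInv (monomial (e1 k) 1)) ^ 2 * geomInv (monomial (e2 k) 1)) =
      if ∃ n r : ℕ, d = n • e1 k + r • e2 k then ((d (Sum.inl (2*k)) : ℤ) + 1) else 0 := by
  have h11 : e1 k (Sum.inl (2*k)) = 1 := by rw [e1_apply_inl]; simp
  have h10 : e1 k (Sum.inl (2*k-1)) = 0 := by rw [e1_apply_inl]; rw [if_neg]; omega
  have h22 : e2 k (Sum.inl (2*k-1)) = 2 := by rw [e2_apply_inl]; simp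
  have h20 : e2 k (Sum.inl (2*k)) = 0 := by rw [e2_apply_inl]; rw [if_neg]; omega
  rw [coeff_mul]
  simp only [coeff_geomInv_sq (e1 k) (Sum.inl (2*k)) h11,
    coeff_geomInv (e2 k) (Sum.inl (2*k-1)) (by rw [h22]; norm_num),
    ite_zero_mul_ite_zero, mul_one]
  by_cases hex : ∃ n r : ℕ, d = n • e1 k + r • e2 k
  · obtain ⟨n, r, rfl⟩ := hex
    rw [if_pos ⟨n, r, rfl⟩]
    rw [Finset.sum_eq_single_of_mem (n • e1 k, r • e2 k)
      (by rw [HasAntidiagonal.mem_antidiagonal])]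
    · rw [if_pos ⟨⟨n, rfl⟩, ⟨r, rfl⟩⟩]
      simp [h11, h20]
    · intro x hx hne
      rw [HasAntidiagonal.mem_antidiagonal] at hx
      by_cases hpq : (∃ a : ℕ, x.1 = a • e1 k) ∧ (∃ b : ℕ, x.2 = b • e2 k)
      · exfalso
        obtain ⟨⟨a, ha⟩, ⟨b, hb⟩⟩ := hpq
        have hw := congrArg (fun f : Var →₀ ℕ => f (Sum.inl (2*k))) hx
        simp only [Finsupp.add_apply, Finsupp.smul_apply, ha, hb, smul_eq_mul, h11, h20] at hw
        have hw' := congrArg (fun f : Var →₀ ℕ => f (Sum.inl (2*k-1))) hx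
        simp only [Finsupp.add_apply, Finsupp.smul_apply, ha, hb, smul_eq_mul, h10, h22] at hw'
        apply hne
        have han : a = n := by omega
        have hbr : b = r := by omega
        rw [← Prod.mk.eta (p := x), ha, hb, han, hbr]
      · rw [if_neg hpq]
  · rw [if_neg hex]
    apply Finset.sum_eq_zero
    intro x hx
    rw [HasAntidiagonal.mem_antidiagonal] at hx
    by_cases hpq : (∃ a : ℕ, x.1 = a • e1 k) ∧ (∃ b : ℕ, x.2 = b • e2 k)
    · exfalso
      obtain ⟨⟨a, ha⟩, ⟨b, hb⟩⟩ := hpq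
      exact hex ⟨a, b, by rw [← hx, ha, hb]⟩
    · rw [if_neg hpq]

def mc {n : ℕ} (lam : Nat.Partition n) (i : ℕ) : ℕ := Multiset.count i lam.parts

lemma mc_bound {p : ℕ} (lam : Nat.Partition (2*p)) (i : ℕ) (h : mc lam i ≠ 0) :
    1 ≤ i ∧ i ≤ 2*p := by
  have hi : i ∈ lam.parts := by
    rw [← Multiset.count_pos]; unfold mc at h; omega
  exact ⟨lam.parts_pos hi, le_trans (Multiset.le_sum_of_mem hi) (le_of_eq lam.parts_sum)⟩

lemma mc_sum {p : ℕ} (lam : Nat.Partition (2*p)) :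
    ∑ i ∈ lam.parts.toFinset, i * mc lam i = 2*p := by
  have h := congrArg Multiset.sum (Multiset.toFinset_sum_count_nsmul_eq lam.parts)
  rw [lam.parts_sum] at h
  refine Eq.trans ?_ h
  rw [show Multiset.sum = ⇑(Multiset.sumAddMonoidHom : Multiset ℕ →+ ℕ) from
    (Multiset.coe_sumAddMonoidHom).symm, map_sum]
  apply Finset.sum_congr rfl
  intro i _
  rw [map_nsmul]
  simp [mc, mul_comm]

lemma split_gen (f : ℕ → ℕ) (M : ℕ) :
    ∑ k ∈ Icc 1 M, (2*k * f (2*k) + (2*k-1) * f (2*k-1)) = ∑ i ∈ Icc 1 (2*M), i * f i := by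
  induction M with
  | zero => simp
  | succ M ih =>
    rw [Finset.sum_Icc_succ_top (by omega : 1 ≤ M + 1), ih,
      show 2*(M+1) = (2*M+1)+1 by ring,
      Finset.sum_Icc_succ_top (by omega : 1 ≤ (2*M+1)+1),
      Finset.sum_Icc_succ_top (by omega : 1 ≤ 2*M+1)]
    have h1 : (2*M+1)+1-1 = 2*M+1 := by omega
    rw [h1]
    ring

lemma factS {p : ℕ} (lam : Nat.Partition (2*p)) (N : ℕ) (hN : 2*p ≤ N)
    (H : ∀ i, Odd i → Even (mc lam i)) :
    ∑ k ∈ Icc 1 N, (mc lam (2*k) * k + (mc lam (2*k-1) / 2) * (2*k-1)) = p := by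
  have h1 : ∑ i ∈ Icc 1 (2*N), i * mc lam i = 2*p := by
    refine Eq.trans (Finset.sum_subset ?_ ?_).symm (mc_sum lam)
    · intro i hi
      rw [Multiset.mem_toFinset] at hi
      have := mc_bound lam i (by unfold mc; rw [← Multiset.count_pos] at hi; omega)
      rw [mem_Icc]; omega
    · intro i _ hi
      rw [Multiset.mem_toFinset] at hi
      unfold mc
      rw [Multiset.count_eq_zero_of_notMem hi, mul_zero]
  have h2 := split_gen (mc lam) N
  have h3 : 2 * ∑ k ∈ Icc 1 N, (mc lam (2*k) * k + (mc lam (2*k-1) / 2) * (2*k-1))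
      = ∑ k ∈ Icc 1 N, (2*k * mc lam (2*k) + (2*k-1) * mc lam (2*k-1)) := by
    rw [Finset.mul_sum]
    apply Finset.sum_congr rfl
    intro k hk
    have hk1 : 1 ≤ k := (mem_Icc.mp hk).1
    obtain ⟨c, hc⟩ := H (2*k-1) ⟨k-1, by omega⟩
    have hdiv : mc lam (2*k-1) / 2 = c := by omega
    rw [hdiv, hc]
    ring
  omega

lemma degOf_inr {p : ℕ} (lam : Nat.Partition (2*p)) (b : Bool) :
    degOf lam p p (Sum.inr b) = p := by
  unfold degOf
  rw [Finsupp.add_apply, Finsupp.add_apply, Finsupp.finset_sum_apply]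
  cases b <;> simp [Finsupp.single_apply]

lemma degOf_inl {p : ℕ} (lam : Nat.Partition (2*p)) (i : ℕ) :
    degOf lam p p (Sum.inl i) = mc lam i := by
  unfold degOf
  rw [Finsupp.add_apply, Finsupp.add_apply, Finsupp.finset_sum_apply]
  simp only [Finsupp.single_apply, Sum.inl.injEq]
  rw [Finset.sum_ite_eq' lam.parts.toFinset i (fun j => Multiset.count j lam.parts)]
  by_cases hi : i ∈ lam.parts.toFinset
  · rw [if_pos hi]; simp [mc]
  · rw [if_neg hi]
    rw [Multiset.mem_toFinset] at hi
    simp [mc, Multiset.count_eq_zero_of_notMem hi]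

-- the distinguished decomposition
noncomputable def L0 {p : ℕ} (lam : Nat.Partition (2*p)) (N : ℕ) : ℕ →₀ (Var →₀ ℕ) :=
  Finsupp.onFinset (Icc 1 N)
    (fun k => if k ∈ Icc 1 N then mc lam (2*k) • e1 k + (mc lam (2*k-1) / 2) • e2 k else 0)
    (fun k h => by by_contra hh; simp [hh] at h)

lemma L0_apply_mem {p : ℕ} (lam : Nat.Partition (2*p)) (N : ℕ) {k : ℕ} (hk : k ∈ Icc 1 N) :
    L0 lam N k = mc lam (2*k) • e1 k + (mc lam (2*k-1) / 2) • e2 k := by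
  simp only [L0, Finsupp.onFinset_apply]
  rw [if_pos hk]

lemma L0_apply_not_mem {p : ℕ} (lam : Nat.Partition (2*p)) (N : ℕ) {k : ℕ} (hk : k ∉ Icc 1 N) :
    L0 lam N k = 0 := by
  simp only [L0, Finsupp.onFinset_apply]
  rw [if_neg hk]

theorem decomp_determined {p : ℕ} (lam : Nat.Partition (2*p)) (N : ℕ)
    (l : ℕ →₀ (Var →₀ ℕ))
    (hl : l ∈ finsuppAntidiag (Icc 1 N) (degOf lam p p))
    (hall : ∀ k' ∈ Icc 1 N, ∃ n r : ℕ, l k' = n • e1 k' + r • e2 k')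
    (k : ℕ) (hk : k ∈ Icc 1 N) :
    ∃ n r : ℕ, l k = n • e1 k + r • e2 k ∧ n = mc lam (2*k) ∧ 2*r = mc lam (2*k-1) := by
  rw [mem_finsuppAntidiag] at hl
  obtain ⟨hsum, _⟩ := hl
  obtain ⟨n, r, hnr⟩ := hall k hk
  have hk1 := mem_Icc.mp hk
  have key : ∀ v : Var, (l k) v = 0 ∨ (∀ k' ∈ Icc 1 N, k' ≠ k → (l k') v = 0) →
      True := fun _ _ => trivial
  have hsum_at : ∀ v : Var, ∑ k' ∈ Icc 1 N, (l k') v = degOf lam p p v := by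
    intro v
    rw [← Finsupp.finset_sum_apply, hsum]
  -- at Sum.inl (2*k)
  have ha : (l k) (Sum.inl (2*k)) = mc lam (2*k) := by
    rw [← degOf_inl lam, ← hsum_at (Sum.inl (2*k))]
    symm
    apply Finset.sum_eq_single_of_mem k hk
    intro k' hk' hne
    obtain ⟨a, b, hab⟩ := hall k' hk'
    have hk'1 := mem_Icc.mp hk'
    rw [hab, Finsupp.add_apply, Finsupp.smul_apply, Finsupp.smul_apply,
      e1_apply_inl, e2_apply_inl, if_neg (by omega), if_neg (by omega)]
    simp
  have hb : (l k) (Sum.inl (2*k)) = n := by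
    rw [hnr, Finsupp.add_apply, Finsupp.smul_apply, Finsupp.smul_apply,
      e1_apply_inl, e2_apply_inl, if_pos rfl, if_neg (by omega)]
    simp
  -- at Sum.inl (2*k-1)
  have hc : (l k) (Sum.inl (2*k-1)) = mc lam (2*k-1) := by
    rw [← degOf_inl lam, ← hsum_at (Sum.inl (2*k-1))]
    symm
    apply Finset.sum_eq_single_of_mem k hk
    intro k' hk' hne
    obtain ⟨a, b, hab⟩ := hall k' hk'
    have hk'1 := mem_Icc.mp hk'
    rw [hab, Finsupp.add_apply, Finsupp.smul_apply, Finsupp.smul_apply,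
      e1_apply_inl, e2_apply_inl, if_neg (by omega), if_neg (by omega)]
    simp
  have hd : (l k) (Sum.inl (2*k-1)) = 2*r := by
    rw [hnr, Finsupp.add_apply, Finsupp.smul_apply, Finsupp.smul_apply,
      e1_apply_inl, e2_apply_inl, if_neg (by omega), if_pos rfl]
    simp [mul_comm]
  exact ⟨n, r, hnr, by omega, by omega⟩

lemma L0_sum {p : ℕ} (lam : Nat.Partition (2*p)) (N : ℕ) (hN : 2*p ≤ N)
    (H : ∀ i, Odd i → Even (mc lam i)) :
    ∑ k ∈ Icc 1 N, L0 lam N k = degOf lam p p := by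
  apply Finsupp.ext
  intro v
  rw [Finsupp.finset_sum_apply]
  have hre : ∀ k ∈ Icc 1 N, (L0 lam N k) v =
      (mc lam (2*k) • e1 k + (mc lam (2*k-1)/2) • e2 k) v :=
    fun k hk => by rw [L0_apply_mem lam N hk]
  rw [Finset.sum_congr rfl hre]
  cases v with
  | inr b =>
    rw [degOf_inr lam b]
    refine Eq.trans (Finset.sum_congr rfl ?_) (factS lam N hN H)
    intro k hk
    rw [Finsupp.add_apply, Finsupp.smul_apply, Finsupp.smul_apply, e1_apply_inr, e2_apply_inr]
    simp
  | inl i =>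
    rw [degOf_inl lam i]
    have hsplit : ∀ k ∈ Icc 1 N, (mc lam (2*k) • e1 k + (mc lam (2*k-1)/2) • e2 k) (Sum.inl i)
        = (if 2*k = i then mc lam i else 0) + (if 2*k-1 = i then 2*(mc lam i / 2) else 0) := by
      intro k hk
      have hk1 := mem_Icc.mp hk
      rw [Finsupp.add_apply, Finsupp.smul_apply, Finsupp.smul_apply, e1_apply_inl, e2_apply_inl]
      rcases eq_or_ne (2*k) i with h1 | h1
      · rw [if_pos h1, if_pos h1, if_neg (by omega), if_neg (by omega), ← h1]
        simp
      · rw [if_neg h1, if_neg h1]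
        rcases eq_or_ne (2*k-1) i with h2 | h2
        · rw [if_pos h2, if_pos h2, ← h2]
          simp [mul_comm]
        · rw [if_neg h2, if_neg h2]
          simp
    rw [Finset.sum_congr rfl hsplit, Finset.sum_add_distrib]
    rcases Nat.even_or_odd i with he | ho
    · obtain ⟨j, hj⟩ := he
      have hs2 : ∑ k ∈ Icc 1 N, (if 2*k-1 = i then 2*(mc lam i / 2) else 0) = 0 := by
        apply Finset.sum_eq_zero
        intro k hk
        have := mem_Icc.mp hk
        rw [if_neg (by omega)]
      have hs1 : ∑ k ∈ Icc 1 N, (if 2*k = i then mc lam i else 0)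
          = if j ∈ Icc 1 N then mc lam i else 0 := by
        rw [← Finset.sum_ite_eq' (Icc 1 N) j (fun _ => mc lam i)]
        exact Finset.sum_congr rfl fun k hk => if_congr (by omega) rfl rfl
      rw [hs1, hs2, add_zero]
      by_cases hj2 : j ∈ Icc 1 N
      · rw [if_pos hj2]
      · rw [if_neg hj2]
        rw [mem_Icc] at hj2
        by_cases hmz : mc lam i = 0
        · exact hmz.symm
        · exfalso
          have := mc_bound lam i hmz
          omega
    · obtain ⟨j, hj⟩ := ho
      have hs1 : ∑ k ∈ Icc 1 N, (if 2*k = i then mc lam i else 0) = 0 := by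
        apply Finset.sum_eq_zero
        intro k hk
        rw [if_neg (by omega)]
      have hs2 : ∑ k ∈ Icc 1 N, (if 2*k-1 = i then 2*(mc lam i / 2) else 0)
          = if j+1 ∈ Icc 1 N then 2*(mc lam i / 2) else 0 := by
        rw [← Finset.sum_ite_eq' (Icc 1 N) (j+1) (fun _ => 2*(mc lam i / 2))]
        refine Finset.sum_congr rfl fun k hk => if_congr ?_ rfl rfl
        have := mem_Icc.mp hk
        omega
      rw [hs1, hs2, zero_add]
      by_cases hj2 : j+1 ∈ Icc 1 N
      · rw [if_pos hj2]
        obtain ⟨c, hc⟩ := H i ⟨j, hj⟩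
        omega
      · rw [if_neg hj2]
        rw [mem_Icc] at hj2
        by_cases hmz : mc lam i = 0
        · exact hmz.symm
        · exfalso
          have := mc_bound lam i hmz
          omega

theorem coeff_rhs {p : ℕ} (lam : Nat.Partition (2*p)) (N : ℕ) (hN : 2*p ≤ N) :
    coeff (R := ℤ) (degOf lam p p) (∏ k ∈ Icc 1 N,
      (geomInv (monomial (e1 k) 1))^2 * geomInv (monomial (e2 k) 1)) =
    if (∀ i, Odd i → Even (mc lam i)) then ((∏ k ∈ Icc 1 N, (mc lam (2*k) + 1) : ℕ) : ℤ)
      else 0 := by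
  rw [coeff_prod]
  have hre : ∀ l ∈ finsuppAntidiag (Icc 1 N) (degOf lam p p),
      (∏ k ∈ Icc 1 N,
        coeff (R := ℤ) (l k) ((geomInv (monomial (e1 k) 1))^2 * geomInv (monomial (e2 k) 1))) =
      ∏ k ∈ Icc 1 N, (if ∃ n r : ℕ, l k = n • e1 k + r • e2 k
        then (((l k) (Sum.inl (2*k)) : ℤ) + 1) else 0) :=
    fun l _ => Finset.prod_congr rfl fun k hk => coeff_factor k (mem_Icc.mp hk).1 (l k)
  rw [Finset.sum_congr rfl hre]
  by_cases H : ∀ i, Odd i → Even (mc lam i)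
  · rw [if_pos H]
    have hmem : L0 lam N ∈ finsuppAntidiag (Icc 1 N) (degOf lam p p) := by
      rw [mem_finsuppAntidiag]
      exact ⟨L0_sum lam N hN H, Finsupp.support_onFinset_subset⟩
    refine Eq.trans (Finset.sum_eq_single_of_mem (L0 lam N) hmem ?_) ?_
    · intro l hl hne
      by_contra hne0
      have hall : ∀ k ∈ Icc 1 N, ∃ n r : ℕ, l k = n • e1 k + r • e2 k := by
        intro k hk
        have hnz := Finset.prod_ne_zero_iff.mp hne0 k hk
        by_contra hcon
        rw [if_neg hcon] at hnz
        exact hnz rfl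
      apply hne
      apply Finsupp.ext
      intro k
      by_cases hk : k ∈ Icc 1 N
      · obtain ⟨n, r, hnr, hn, hr⟩ := decomp_determined lam N l hl hall k hk
        rw [hnr, L0_apply_mem lam N hk, hn]
        have : r = mc lam (2*k-1)/2 := by omega
        rw [this]
      · rw [L0_apply_not_mem lam N hk]
        rw [mem_finsuppAntidiag] at hl
        by_contra hlk
        exact hk (hl.2 (Finsupp.mem_support_iff.mpr hlk))
    · have hval : ∀ k ∈ Icc 1 N, (if ∃ n r : ℕ, L0 lam N k = n • e1 k + r • e2 k
          then (((L0 lam N k) (Sum.inl (2*k)) : ℤ) + 1) else 0) = ((mc lam (2*k) : ℤ) + 1) := by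
        intro k hk
        rw [L0_apply_mem lam N hk, if_pos ⟨mc lam (2*k), mc lam (2*k-1)/2, rfl⟩,
          Finsupp.add_apply, Finsupp.smul_apply, Finsupp.smul_apply, e1_apply_inl, e2_apply_inl,
          if_pos rfl, if_neg (by have := mem_Icc.mp hk; omega)]
        simp
      rw [Finset.prod_congr rfl hval]
      push_cast
      rfl
  · rw [if_neg H]
    push_neg at H
    obtain ⟨i0, hodd, hnev⟩ := H
    apply Finset.sum_eq_zero
    intro l hl
    by_contra hne0
    have hall : ∀ k ∈ Icc 1 N, ∃ n r : ℕ, l k = n • e1 k + r • e2 k := by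
      intro k hk
      have hnz := Finset.prod_ne_zero_iff.mp hne0 k hk
      by_contra hcon
      rw [if_neg hcon] at hnz
      exact hnz rfl
    obtain ⟨j, hj⟩ := hodd
    have hmz : mc lam i0 ≠ 0 := by
      intro h
      rw [h] at hnev
      exact hnev Even.zero
    have hb := mc_bound lam i0 hmz
    have hk0 : j+1 ∈ Icc 1 N := by rw [mem_Icc]; omega
    obtain ⟨n, r, hnr, hn, hr⟩ := decomp_determined lam N l hl hall (j+1) hk0
    have hi : 2*(j+1)-1 = i0 := by omega
    rw [hi] at hr
    exact hnev ⟨r, by omega⟩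

lemma SYD.ext' {n : ℕ} {lam : Nat.Partition n} {p q : ℕ} {T T' : SYD lam p q}
    (h : T.f = T'.f) : T = T' := by
  cases T; cases T'; cases h; rfl

lemma sum_half {p : ℕ} (lam : Nat.Partition (2*p)) (f : ℕ → ℕ)
    (hle : ∀ i, f i ≤ mc lam i) (hodd : ∀ i, Odd i → 2 * f i = mc lam i) :
    (∑ i ∈ lam.parts.toFinset,
      (f i * ((i + 1) / 2) + (mc lam i - f i) * (i / 2)) = p) ∧
    (∑ i ∈ lam.parts.toFinset,
      (f i * (i / 2) + (mc lam i - f i) * ((i + 1) / 2)) = p) := by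
  have key : ∀ i ∈ lam.parts.toFinset,
      2*(f i * ((i+1)/2) + (mc lam i - f i)*(i/2)) = i * mc lam i ∧
      2*(f i * (i/2) + (mc lam i - f i)*((i+1)/2)) = i * mc lam i := by
    intro i _
    rcases Nat.even_or_odd i with he | ho
    · obtain ⟨j, hj⟩ := he
      have e1 : (i+1)/2 = i/2 := by omega
      have e2 : i/2 = j := by omega
      have hc : f i + (mc lam i - f i) = mc lam i := by have := hle i; omega
      rw [e1, e2]
      have hmain : 2*(f i * j + (mc lam i - f i)*j) = i * mc lam i := by
        calc 2*(f i * j + (mc lam i - f i)*j)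
            = (f i + (mc lam i - f i)) * (2*j) := by ring
          _ = mc lam i * (2*j) := by rw [hc]
          _ = i * mc lam i := by rw [hj]; ring
      exact ⟨hmain, hmain⟩
    · obtain ⟨j, hj⟩ := ho
      have hfi := hodd i ⟨j, hj⟩
      have e1 : (i+1)/2 = j+1 := by omega
      have e2 : i/2 = j := by omega
      have e3 : mc lam i - f i = f i := by omega
      rw [e1, e2, e3, ← hfi, hj]
      constructor <;> ring
  constructor
  · have h2 : 2 * ∑ i ∈ lam.parts.toFinset,
        (f i * ((i+1)/2) + (mc lam i - f i)*(i/2)) = 2 * p := by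
      rw [Finset.mul_sum, Finset.sum_congr rfl (fun i hi => (key i hi).1), mc_sum]
    omega
  · have h2 : 2 * ∑ i ∈ lam.parts.toFinset,
        (f i * (i/2) + (mc lam i - f i)*((i+1)/2)) = 2 * p := by
      rw [Finset.mul_sum, Finset.sum_congr rfl (fun i hi => (key i hi).2), mc_sum]
    omega

theorem lhs_count {p : ℕ} (lam : Nat.Partition (2*p)) (N : ℕ) (hN : 2*p ≤ N) :
    Nat.card {T : SYD lam p p // ∀ i, Odd i → 2 * T.f i = Multiset.count i lam.parts} =
      if (∀ i, Odd i → Even (mc lam i)) then ∏ k ∈ Icc 1 N, (mc lam (2*k) + 1) else 0 := by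
  by_cases H : ∀ i, Odd i → Even (mc lam i)
  · rw [if_pos H]
    set F : (∀ k : {x // x ∈ Icc 1 N}, Fin (mc lam (2 * (k:ℕ)) + 1)) → ℕ → ℕ :=
      fun g i => if i % 2 = 1 then mc lam i / 2
        else if h : i/2 ∈ Icc 1 N then (g ⟨i/2, h⟩ : ℕ) else 0 with hF
    have hFle : ∀ g i, F g i ≤ mc lam i := by
      intro g i
      simp only [hF]
      by_cases h1 : i % 2 = 1
      · rw [if_pos h1]; exact Nat.div_le_self _ _
      · rw [if_neg h1]
        by_cases h2 : i/2 ∈ Icc 1 N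
        · rw [dif_pos h2]
          have hb : (g ⟨i/2, h2⟩ : ℕ) ≤ mc lam (2*(i/2)) := Fin.is_le (g ⟨i/2, h2⟩)
          have h3 : 2*(i/2) = i := by omega
          have h4 : mc lam (2*(i/2)) = mc lam i := by rw [h3]
          exact le_trans hb (le_of_eq h4)
        · rw [dif_neg h2]; exact Nat.zero_le _
    have hFodd : ∀ g i, Odd i → 2 * F g i = mc lam i := by
      intro g i hi
      rw [Nat.odd_iff] at hi
      simp only [hF]
      simp only [if_pos hi]
      obtain ⟨c, hc⟩ := H i (Nat.odd_iff.mpr hi)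
      omega
    have e : {T : SYD lam p p // ∀ i, Odd i → 2 * T.f i = Multiset.count i lam.parts} ≃
        (∀ k : {x // x ∈ Icc 1 N}, Fin (mc lam (2 * (k:ℕ)) + 1)) := by
      refine ⟨fun T k => ⟨T.1.f (2*(k:ℕ)), Nat.lt_succ_of_le (T.1.le_mult _)⟩,
        fun g => ⟨⟨F g, hFle g, (sum_half lam (F g) (hFle g) (hFodd g)).1,
          (sum_half lam (F g) (hFle g) (hFodd g)).2⟩, fun i hi => hFodd g i hi⟩, ?_, ?_⟩
      · intro T
        apply Subtype.ext
        apply SYD.ext'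
        funext i
        show F (fun k => ⟨T.1.f (2*(k:ℕ)), Nat.lt_succ_of_le (T.1.le_mult _)⟩) i = T.1.f i
        simp only [hF]
        by_cases h1 : i % 2 = 1
        · rw [if_pos h1]
          have := T.2 i (Nat.odd_iff.mpr h1)
          have hmc : mc lam i = Multiset.count i lam.parts := rfl
          omega
        · rw [if_neg h1]
          by_cases h2 : i/2 ∈ Icc 1 N
          · rw [dif_pos h2]
            show T.1.f (2*(i/2)) = T.1.f i
            congr 1
            omega
          · rw [dif_neg h2]
            rw [mem_Icc] at h2
            have hle := T.1.le_mult i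
            have hmc : mc lam i = Multiset.count i lam.parts := rfl
            have hz : mc lam i = 0 := by
              by_contra hmz
              have := mc_bound lam i hmz
              omega
            omega
      · intro g
        funext k
        apply Fin.ext
        show F g (2*(k:ℕ)) = ((g k : ℕ))
        simp only [hF]
        have hk1 := mem_Icc.mp k.2
        rw [if_neg (by omega)]
        have hdiv : (2*(k:ℕ))/2 = (k:ℕ) := by omega
        simp only [hdiv]
        rw [dif_pos k.2]
        exact congrArg (fun x : {x // x ∈ Icc 1 N} => ((g x : ℕ))) (Subtype.ext hdiv)
    rw [Nat.card_congr e, Nat.card_pi]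
    have : ∀ k : {x // x ∈ Icc 1 N}, Nat.card (Fin (mc lam (2 * (k:ℕ)) + 1))
        = mc lam (2 * (k:ℕ)) + 1 := fun k => by simp
    rw [Finset.prod_congr rfl (fun k _ => this k)]
    exact Finset.prod_coe_sort (Icc 1 N) (fun k => mc lam (2*k) + 1)
  · rw [if_neg H]
    push_neg at H
    obtain ⟨i0, hodd, hnev⟩ := H
    have : IsEmpty {T : SYD lam p p // ∀ i, Odd i → 2 * T.f i = Multiset.count i lam.parts} := by
      refine ⟨fun T => hnev ⟨T.1.f i0, ?_⟩⟩
      have := T.2 i0 hodd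
      have hmc : mc lam i0 = Multiset.count i0 lam.parts := rfl
      omega
    exact Nat.card_of_isEmpty

lemma va_mono (k : ℕ) : va ^ k * vb ^ k * vt (2*k) = MvPowerSeries.monomial (e1 k) 1 := by
  simp only [va, vb, vt, e1]
  rw [X_pow_eq, X_pow_eq, X_def, monomial_mul_monomial, monomial_mul_monomial, one_mul, one_mul]

lemma vb_mono (k : ℕ) : va ^ (2*k-1) * vb ^ (2*k-1) * vt (2*k-1) ^ 2 =
    MvPowerSeries.monomial (e2 k) 1 := by
  simp only [va, vb, vt, e2]
  rw [X_pow_eq, X_pow_eq, X_pow_eq, monomial_mul_monomial, monomial_mul_monomial, one_mul, one_mul]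

end Aux

/-- Generating function for the number of signed Young diagrams of type CI:
`syd_CI(λ;p,p)` consists of the signed Young diagrams `T ∈ syd(λ;p,p)` with
`m_T⁺(i) = m(i)/2` for every odd part length `i`. -/
theorem stmt2 (p : ℕ) (lam : Nat.Partition (2 * p)) (N : ℕ) (hN : 2 * p ≤ N) :
    (Nat.card {T : SYD lam p p //
        ∀ i, Odd i → 2 * T.f i = Multiset.count i lam.parts} : ℤ) =
      MvPowerSeries.coeff (R := ℤ) (degOf lam p p)
        (∏ k ∈ Finset.Icc 1 N,
          (geomInv (va ^ k * vb ^ k * vt (2 * k))) ^ 2 *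
            geomInv (va ^ (2 * k - 1) * vb ^ (2 * k - 1) * vt (2 * k - 1) ^ 2)) := by
  have hfac : ∀ k ∈ Finset.Icc 1 N, (geomInv (va ^ k * vb ^ k * vt (2 * k))) ^ 2 *
      geomInv (va ^ (2 * k - 1) * vb ^ (2 * k - 1) * vt (2 * k - 1) ^ 2) =
      (geomInv (MvPowerSeries.monomial (e1 k) 1)) ^ 2 *
        geomInv (MvPowerSeries.monomial (e2 k) 1) := by
    intro k _
    rw [va_mono, vb_mono]
  rw [Finset.prod_congr rfl hfac, coeff_rhs lam N hN, lhs_count lam N hN]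
  split_ifs with h
  · rfl
  · rfl
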